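/- Let U ⊆ O be open, let f : ℂ × ℂ → ℂ be holomorphic on U, let m, n ∈ ℕ with m ≥ 1 and n ≥ 1, and let (z,w) ∈ U with z ≠ 0 and w ≠ 0. Then D^{n,m} f(z,w) = Σ_{j=1}^{n} Σ_{k=1}^{m} (∂₁^j ∂₂^k f)(z,w) · (1 − z·w)^{j+k} · (n!·m!/(j!·k!)) · binom(n−1, j−1) · binom(m−1, k−1) · (−w)^{n−j} · (−z)^{m−k}, where ∂₁^j ∂₂^k f(z,w) := iteratedDeriv k (fun b => iteratedDeriv j (fun a => f(a,b)) z) w denotes the iterated complex partial derivative of order j in the first and k in the second variable. -/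

import Mathlib

/-- The domain `O = {(z,w) ∈ ℂ² : z·w ≠ 1}`. -/
def Oset : Set (ℂ × ℂ) := {p | p.1 * p.2 ≠ 1}

/-- The Peschl–Minda derivative of order `(m,n)` of `f` at `(z,w)`. -/
noncomputable def PM (m n : ℕ) (f : ℂ × ℂ → ℂ) (z w : ℂ) : ℂ :=
  iteratedDeriv n (fun v => iteratedDeriv m
    (fun u => f ((z + u) / (1 + w * u), (w + v) / (1 + z * v))) 0) 0


noncomputable def cc (n j : ℕ) : ℂ :=
  match j with
  | 0 => 0
  | (i+1) => (n.factorial : ℂ) / ((i+1).factorial : ℂ) * ((n-1).choose i : ℂ)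

lemma cc_zero (n : ℕ) : cc n 0 = 0 := rfl

lemma cc_succ (n i : ℕ) : cc n (i+1) = (n.factorial : ℂ) / ((i+1).factorial : ℂ) * ((n-1).choose i : ℂ) := rfl

lemma cc_one_one : cc 1 1 = 1 := by simp [cc_succ]

lemma cc_top (n : ℕ) (hn : 1 ≤ n) : cc n (n+1) = 0 := by
  rw [cc_succ, Nat.choose_eq_zero_of_lt (by omega)]
  simp

lemma natId (n i : ℕ) (hn : 1 ≤ n) :
    (n+1) * Nat.choose n (i+1) = (i+2) * Nat.choose (n-1) i + (n+2+i) * Nat.choose (n-1) (i+1) := by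
  obtain ⟨m, rfl⟩ : ∃ m, n = m + 1 := ⟨n - 1, by omega⟩
  simp only [Nat.add_sub_cancel]
  have key := Nat.choose_succ_right_eq m i
  rcases le_or_gt i m with hle | hlt
  · rw [Nat.choose_succ_succ]
    zify [hle] at key ⊢
    linear_combination -key
  · rw [Nat.choose_eq_zero_of_lt (by omega), Nat.choose_eq_zero_of_lt (by omega),
      Nat.choose_eq_zero_of_lt (by omega)]
    simp

lemma cc_rec (n j : ℕ) (hn : 1 ≤ n) :
    cc (n+1) (j+1) = cc n j + ((n : ℂ) + 1 + j) * cc n (j+1) := by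
  cases j with
  | zero =>
    simp only [cc_succ, cc_zero, Nat.add_sub_cancel, Nat.choose_zero_right,
      Nat.factorial_one, Nat.factorial_succ (n)]
    push_cast
    ring
  | succ i =>
    have h := natId n i hn
    have h1 : ((n+1).factorial : ℂ) = (n+1) * n.factorial := by
      rw [Nat.factorial_succ]; push_cast; ring
    have h2 : ((i+1+1).factorial : ℂ) = (i+2) * (i+1).factorial := by
      rw [Nat.factorial_succ (i+1)]; push_cast; ring
    have hf1 : ((i+1).factorial : ℂ) ≠ 0 := Nat.cast_ne_zero.mpr (Nat.factorial_ne_zero _)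
    have h3 : ((i:ℂ)+2) ≠ 0 := by
      have : ((i+2 : ℕ) : ℂ) ≠ 0 := Nat.cast_ne_zero.mpr (by omega)
      push_cast at this; exact this
    have hc : ((n:ℂ)+1) * (Nat.choose n (i+1) : ℂ) = ((i:ℂ)+2) * (Nat.choose (n-1) i : ℂ) + ((n:ℂ)+2+i) * (Nat.choose (n-1) (i+1) : ℂ) := by
      exact_mod_cast congrArg (Nat.cast : ℕ → ℂ) h
    simp only [cc_succ, Nat.add_sub_cancel, h1, h2]
    push_cast at hc ⊢
    field_simp
    linear_combination (n.factorial : ℂ) * hc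

lemma analytic_iteratedDeriv {g : ℂ → ℂ} {V : Set ℂ} (hg : AnalyticOnNhd ℂ g V) (k : ℕ) :
    AnalyticOnNhd ℂ (iteratedDeriv k g) V := by
  induction k with
  | zero => simpa [iteratedDeriv_zero] using hg
  | succ k ih => rw [iteratedDeriv_succ]; exact ih.deriv

lemma key {g : ℂ → ℂ} {V : Set ℂ} (hV : IsOpen V) (hg : AnalyticOnNhd ℂ g V)
    (z w : ℂ) : ∀ n, 1 ≤ n → ∀ u, 1 + w * u ≠ 0 → (z + u) / (1 + w * u) ∈ V →
    iteratedDeriv n (fun x => g ((z + x) / (1 + w * x))) u =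
      ∑ i ∈ Finset.range n, iteratedDeriv (i+1) g ((z + u) / (1 + w * u)) *
        ((1 - z*w)^(i+1) * cc n (i+1) * (-w)^(n-(i+1))) / (1 + w * u)^(n+i+1) := by
  have hD : ∀ k, ∀ y ∈ V, HasDerivAt (iteratedDeriv k g) (iteratedDeriv (k+1) g y) y := by
    intro k y hy
    have h1 := ((analytic_iteratedDeriv hg k) y hy).differentiableAt.hasDerivAt
    rw [iteratedDeriv_succ]
    exact h1
  intro n hn
  induction n, hn using Nat.le_induction with
  | base =>
    intro u hu1 hu2
    have hd : HasDerivAt (fun x => 1 + w * x) w u := by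
      simpa using ((hasDerivAt_id u).const_mul w).const_add 1
    have hnum : HasDerivAt (fun x : ℂ => z + x) 1 u := by
      simpa using (hasDerivAt_id u).const_add z
    have hT : HasDerivAt (fun x => (z + x) / (1 + w * x))
        ((1 - z*w)/(1 + w*u)^2) u := by
      have h := hnum.fun_div hd hu1
      exact h.congr_deriv (by ring)
    have h0 : HasDerivAt g (deriv g ((z+u)/(1+w*u))) ((z+u)/(1+w*u)) :=
      ((hg _ hu2)).differentiableAt.hasDerivAt
    have h := h0.comp u hT
    simp only [Function.comp_def] at h
    rw [iteratedDeriv_one, h.deriv]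
    simp only [Finset.sum_range_one]
    norm_num [cc_one_one, iteratedDeriv_one]
    ring
  | succ n hn IH =>
    intro u hu1 hu2
    set T : ℂ → ℂ := fun x => (z + x) / (1 + w * x) with hTdef
    set W : Set ℂ := {x | 1 + w * x ≠ 0 ∧ T x ∈ V} with hWdef
    have hS : IsOpen {x : ℂ | 1 + w * x ≠ 0} := by
      have : {x : ℂ | 1 + w * x ≠ 0} = (fun x => 1 + w * x) ⁻¹' ({0}ᶜ) := rfl
      rw [this]
      exact (isOpen_compl_singleton).preimage (by continuity)
    have hTc : ContinuousOn T {x : ℂ | 1 + w * x ≠ 0} := by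
      apply ContinuousOn.div (by fun_prop) (by fun_prop) (fun x hx => hx)
    have hW : IsOpen W := by
      have : W = {x : ℂ | 1 + w * x ≠ 0} ∩ T ⁻¹' V := by
        ext x; simp [hWdef]
      rw [this]
      exact hTc.isOpen_inter_preimage hS hV
    have hmem : u ∈ W := ⟨hu1, hu2⟩
    have hd : HasDerivAt (fun x => 1 + w * x) w u := by
      simpa using ((hasDerivAt_id u).const_mul w).const_add 1
    have hnum : HasDerivAt (fun x : ℂ => z + x) 1 u := by
      simpa using (hasDerivAt_id u).const_add z
    have hT : HasDerivAt T ((1 - z*w)/(1 + w*u)^2) u := by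
      have h := hnum.fun_div hd hu1
      exact h.congr_deriv (by ring)
    rw [iteratedDeriv_succ]
    have heq : iteratedDeriv n (fun x => g (T x)) =ᶠ[nhds u]
        (fun x => ∑ i ∈ Finset.range n, iteratedDeriv (i+1) g (T x) *
          ((1 - z*w)^(i+1) * cc n (i+1) * (-w)^(n-(i+1))) / (1 + w * x)^(n+i+1)) := by
      filter_upwards [hW.mem_nhds hmem] with x hx
      exact IH x hx.1 hx.2
    rw [heq.deriv_eq]
    have hterm : ∀ i ∈ Finset.range n, HasDerivAt
        (fun x => iteratedDeriv (i+1) g (T x) *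
          ((1 - z*w)^(i+1) * cc n (i+1) * (-w)^(n-(i+1))) / (1 + w * x)^(n+i+1))
        ((iteratedDeriv (i+2) g (T u) * ((1 - z*w)/(1 + w*u)^2) *
            ((1 - z*w)^(i+1) * cc n (i+1) * (-w)^(n-(i+1))) * (1 + w*u)^(n+i+1) -
          iteratedDeriv (i+1) g (T u) *
            ((1 - z*w)^(i+1) * cc n (i+1) * (-w)^(n-(i+1))) *
            ((n+i+1 : ℕ) * (1 + w*u)^(n+i) * w)) / ((1 + w*u)^(n+i+1))^2) u := by
      intro i _
      have hA : HasDerivAt (fun x => iteratedDeriv (i+1) g (T x))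
          (iteratedDeriv (i+2) g (T u) * ((1 - z*w)/(1 + w*u)^2)) u := by
        have h := (hD (i+1) _ hu2).comp u hT
        simpa [Function.comp_def] using h
      have hB : HasDerivAt (fun x => (1 + w*x)^(n+i+1))
          ((n+i+1 : ℕ) * (1 + w*u)^(n+i) * w) u := by
        simpa using hd.fun_pow (n+i+1)
      exact (hA.mul_const _).div hB (pow_ne_zero _ hu1)
    have hsum := HasDerivAt.fun_sum hterm
    rw [hsum.deriv]
    -- now algebraic identity between sums
    have hb : (1 + w*u) ≠ 0 := hu1
    have target : ∑ i ∈ Finset.range (n+1), iteratedDeriv (i+1) g (T u) *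
        ((1 - z*w)^(i+1) * cc (n+1) (i+1) * (-w)^(n+1-(i+1))) / (1 + w * u)^(n+1+i+1)
      = (∑ i ∈ Finset.range (n+1), iteratedDeriv (i+1) g (T u) *
          ((1 - z*w)^(i+1) * cc n i * (-w)^(n-i)) / (1 + w * u)^(n+i+2))
        + (∑ i ∈ Finset.range (n+1), iteratedDeriv (i+1) g (T u) *
          ((1 - z*w)^(i+1) * (((n:ℂ)+1+i) * cc n (i+1)) * (-w)^(n-i)) / (1 + w * u)^(n+i+2)) := by
      rw [← Finset.sum_add_distrib]
      apply Finset.sum_congr rfl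
      intro i _
      rw [cc_rec n i hn]
      have e1 : n+1-(i+1) = n-i := by omega
      have e2 : n+1+i+1 = n+i+2 := by omega
      rw [e1, e2]
      ring
    rw [target, Finset.sum_range_succ', Finset.sum_range_succ]
    have hz1 : iteratedDeriv (0+1) g (T u) *
        ((1 - z*w)^(0+1) * cc n 0 * (-w)^(n-0)) / (1 + w * u)^(n+0+2) = 0 := by
      rw [cc_zero]; ring
    have hz2 : iteratedDeriv (n+1) g (T u) *
        ((1 - z*w)^(n+1) * (((n:ℂ)+1+n) * cc n (n+1)) * (-w)^(n-n)) / (1 + w * u)^(n+n+2) = 0 := by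
      rw [cc_top n hn]; ring
    rw [hz1, hz2, add_zero, add_zero]
    rw [← Finset.sum_add_distrib]
    apply Finset.sum_congr rfl
    intro i hi
    have hin : i < n := Finset.mem_range.mp hi
    have e3 : n - i = (n - (i+1)) + 1 := by omega
    have e4 : i + 1 + 1 = i + 2 := rfl
    rw [e3, e4, pow_succ]
    push_cast
    field_simp
    ring


open Metric Complex intervalIntegral Set Filter

noncomputable def Q1 (g : ℂ × ℂ → ℂ) : ℂ × ℂ → ℂ := fun p => deriv (fun x => g (x, p.2)) p.1
noncomputable def Q2 (g : ℂ × ℂ → ℂ) : ℂ × ℂ → ℂ := fun p => deriv (fun y => g (p.1, y)) p.2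

structure Nice (g : ℂ × ℂ → ℂ) (U : Set (ℂ × ℂ)) : Prop where
  cont : ContinuousOn g U
  d1 : ∀ p ∈ U, DifferentiableAt ℂ (fun x => g (x, p.2)) p.1
  d2 : ∀ p ∈ U, DifferentiableAt ℂ (fun y => g (p.1, y)) p.2

lemma slice1_open {U : Set (ℂ × ℂ)} (hU : IsOpen U) (b : ℂ) :
    IsOpen {x : ℂ | (x, b) ∈ U} :=
  hU.preimage (continuous_id.prodMk continuous_const)

lemma slice2_open {U : Set (ℂ × ℂ)} (hU : IsOpen U) (a : ℂ) :
    IsOpen {y : ℂ | (a, y) ∈ U} :=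
  hU.preimage (continuous_const.prodMk continuous_id)

lemma repr1 {g : ℂ × ℂ → ℂ} {U : Set (ℂ × ℂ)} (hU : IsOpen U) (hg : Nice g U)
    {a₀ : ℂ} {r : ℝ} {a b : ℂ} (ha : a ∈ ball a₀ r)
    (hb : ∀ x ∈ closedBall a₀ r, (x, b) ∈ U) :
    Q1 g (a, b) = (2 * Real.pi * I : ℂ)⁻¹ • ∮ ζ in C(a₀, r), ((ζ - a)^2)⁻¹ • g (ζ, b) := by
  have hslice : DifferentiableOn ℂ (fun x => g (x, b)) {x : ℂ | (x, b) ∈ U} :=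
    fun x hx => (hg.d1 (x, b) hx).differentiableWithinAt
  have h := Complex.two_pi_I_inv_smul_circleIntegral_sub_sq_inv_smul_of_differentiable
    (slice1_open hU b) (fun x hx => hb x hx) hslice ha
  exact h.symm

lemma nice_swap {g : ℂ × ℂ → ℂ} {U : Set (ℂ × ℂ)} (h : Nice g U) :
    Nice (fun p => g (p.2, p.1)) (Prod.swap ⁻¹' U) where
  cont := h.cont.comp continuous_swap.continuousOn (fun p hp => hp)
  d1 := fun p hp => h.d2 (p.2, p.1) hp
  d2 := fun p hp => h.d1 (p.2, p.1) hp

lemma Q2_eq_Q1_swap (g : ℂ × ℂ → ℂ) (p : ℂ × ℂ) :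
    Q2 g p = Q1 (fun q => g (q.2, q.1)) (p.2, p.1) := rfl

/-- Joint continuity of the first partial derivative. -/
theorem contQ1 {g : ℂ × ℂ → ℂ} {U : Set (ℂ × ℂ)} (hU : IsOpen U) (hg : Nice g U) :
    ContinuousOn (Q1 g) U := by
  intro p₀ hp₀
  obtain ⟨ε, hε, hball⟩ := Metric.isOpen_iff.mp hU p₀ hp₀
  set ρ : ℝ := ε/3 with hρdef
  have hρ : 0 < ρ := by positivity
  have hsub : closedBall p₀.1 (2*ρ) ×ˢ closedBall p₀.2 (2*ρ) ⊆ U := by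
    rw [closedBall_prod_same]
    intro q hq
    exact hball (lt_of_le_of_lt (mem_closedBall.mp hq) (by rw [hρdef]; linarith))
  set F : (ℂ × ℂ) → ℝ → ℂ := fun p θ =>
    deriv (circleMap p₀.1 (2*ρ)) θ • (((circleMap p₀.1 (2*ρ) θ) - p.1)^2)⁻¹ •
      g (circleMap p₀.1 (2*ρ) θ, p.2) with hFdef
  set s : Set (ℂ × ℂ) := ball p₀.1 ρ ×ˢ ball p₀.2 ρ with hsdef
  have hsopen : IsOpen s := isOpen_ball.prod isOpen_ball
  have hp₀s : p₀ ∈ s := ⟨mem_ball_self hρ, mem_ball_self hρ⟩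
  have hkey : ∀ p ∈ s, Q1 g p = (2 * Real.pi * I : ℂ)⁻¹ • ∫ θ in (0:ℝ)..2*Real.pi, F p θ := by
    rintro ⟨a, b⟩ ⟨hp1, hp2⟩
    have h1 : a ∈ ball p₀.1 (2*ρ) := ball_subset_ball (by linarith) hp1
    have h2 : ∀ x ∈ closedBall p₀.1 (2*ρ), (x, b) ∈ U := fun x hx =>
      hsub ⟨hx, ball_subset_closedBall (ball_subset_ball (by linarith) hp2)⟩
    rw [repr1 hU hg h1 h2]
    rfl
  have hne : ∀ (q : s × ℝ), (circleMap p₀.1 (2*ρ) q.2 - ((q.1 : ℂ × ℂ)).1) ≠ 0 := by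
    intro q
    have : ((q.1 : ℂ × ℂ)).1 ∈ ball p₀.1 (2*ρ) :=
      ball_subset_ball (by linarith) q.1.2.1
    exact sub_ne_zero.mpr (circleMap_ne_mem_ball this q.2)
  have hFc : Continuous (Function.uncurry (fun (x : s) θ => F (x : ℂ × ℂ) θ)) := by
    apply Continuous.fun_smul
    · simp only [deriv_circleMap]
      exact ((continuous_circleMap 0 (2*ρ)).comp continuous_snd).mul continuous_const
    apply Continuous.fun_smul
    · apply Continuous.inv₀
      · apply Continuous.pow
        exact ((continuous_circleMap _ _).comp continuous_snd).sub
          (continuous_fst.comp (continuous_subtype_val.comp continuous_fst))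
      · intro q
        exact pow_ne_zero _ (hne q)
    · have hmap : Continuous (fun q : s × ℝ => (circleMap p₀.1 (2*ρ) q.2, ((q.1 : ℂ × ℂ)).2)) :=
        ((continuous_circleMap _ _).comp continuous_snd).prodMk
          (continuous_snd.comp (continuous_subtype_val.comp continuous_fst))
      apply hg.cont.comp_continuous hmap
      intro q
      exact hsub ⟨circleMap_mem_closedBall _ (by positivity) _,
        ball_subset_closedBall (ball_subset_ball (by linarith) q.1.2.2)⟩
  have hInt : Continuous fun x : s => ∫ θ in (0:ℝ)..2*Real.pi, F (x : ℂ × ℂ) θ :=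
    continuous_parametric_intervalIntegral_of_continuous' hFc 0 (2*Real.pi)
  have hΦ : ContinuousOn (fun p => (2 * Real.pi * I : ℂ)⁻¹ •
      ∫ θ in (0:ℝ)..2*Real.pi, F p θ) s := by
    rw [continuousOn_iff_continuous_restrict]
    exact hInt.fun_const_smul _
  have h1 : ContinuousAt (fun p => (2 * Real.pi * I : ℂ)⁻¹ •
      ∫ θ in (0:ℝ)..2*Real.pi, F p θ) p₀ := hΦ.continuousAt (hsopen.mem_nhds hp₀s)
  have h2 : (fun p => (2 * Real.pi * I : ℂ)⁻¹ • ∫ θ in (0:ℝ)..2*Real.pi, F p θ) =ᶠ[nhds p₀] Q1 g := by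
    filter_upwards [hsopen.mem_nhds hp₀s] with p hp
    exact (hkey p hp).symm
  exact (h1.congr h2).continuousWithinAt

theorem contQ2 {g : ℂ × ℂ → ℂ} {U : Set (ℂ × ℂ)} (hU : IsOpen U) (hg : Nice g U) :
    ContinuousOn (Q2 g) U := by
  have h := contQ1 (hU.preimage continuous_swap) (nice_swap hg)
  exact h.comp continuous_swap.continuousOn (fun p hp => hp)

/-- The mixed partial: `∂₁ g` is differentiable in the second variable. -/
theorem mixedQ1 {g : ℂ × ℂ → ℂ} {U : Set (ℂ × ℂ)} (hU : IsOpen U) (hg : Nice g U)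
    {p : ℂ × ℂ} (hp : p ∈ U) : DifferentiableAt ℂ (fun y => Q1 g (p.1, y)) p.2 := by
  obtain ⟨a₀, b₀⟩ := p
  simp only at hp ⊢
  obtain ⟨ε, hε, hball⟩ := Metric.isOpen_iff.mp hU (a₀, b₀) hp
  set ρ : ℝ := ε/3 with hρdef
  have hρ : 0 < ρ := by positivity
  have hsub : closedBall a₀ (2*ρ) ×ˢ closedBall b₀ (2*ρ) ⊆ U := by
    rw [closedBall_prod_same]
    intro q hq
    exact hball (lt_of_le_of_lt (mem_closedBall.mp hq) (by rw [hρdef]; linarith))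
  set c : ℝ → ℂ := circleMap a₀ (2*ρ) with hcdef
  have hcU : ∀ θ (y : ℂ), y ∈ closedBall b₀ ρ → (c θ, y) ∈ U := fun θ y hy =>
    hsub ⟨circleMap_mem_closedBall _ (by positivity) _,
      closedBall_subset_closedBall (by linarith) hy⟩
  have hderc : Continuous (deriv (circleMap a₀ (2*ρ))) := by
    have : deriv (circleMap a₀ (2*ρ)) = fun θ => circleMap 0 (2*ρ) θ * I :=
      funext fun θ => deriv_circleMap _ _ _
    rw [this]
    exact (continuous_circleMap 0 (2*ρ)).mul continuous_const
  have hinvc : Continuous (fun θ => ((c θ - a₀)^2)⁻¹) := by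
    apply Continuous.inv₀
    · exact (((continuous_circleMap _ _).sub continuous_const).pow 2)
    · intro θ
      apply pow_ne_zero
      exact sub_ne_zero.mpr (circleMap_ne_center (by positivity))
  set F : ℂ → ℝ → ℂ := fun b θ =>
    deriv (circleMap a₀ (2*ρ)) θ • ((c θ - a₀)^2)⁻¹ • g (c θ, b) with hFdef
  set F' : ℝ → ℂ := fun θ =>
    deriv (circleMap a₀ (2*ρ)) θ • ((c θ - a₀)^2)⁻¹ • Q2 g (c θ, b₀) with hF'def
  have hKsub : (sphere a₀ (2*ρ) ×ˢ closedBall b₀ ρ : Set (ℂ × ℂ)) ⊆ U := by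
    intro q hq
    exact hsub ⟨sphere_subset_closedBall hq.1, closedBall_subset_closedBall (by linarith) hq.2⟩
  obtain ⟨L, hL⟩ := ((isCompact_sphere a₀ (2*ρ)).prod
    (isCompact_closedBall b₀ ρ)).exists_bound_of_continuousOn ((contQ2 hU hg).mono hKsub)
  set L' : ℝ := max L 0 with hL'def
  have hL'0 : 0 ≤ L' := le_max_right _ _
  have hL' : ∀ q ∈ (sphere a₀ (2*ρ) ×ˢ closedBall b₀ ρ : Set (ℂ × ℂ)), ‖Q2 g q‖ ≤ L' :=
    fun q hq => (hL q hq).trans (le_max_left _ _)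
  set bound : ℝ → ℝ := fun _ => (2*ρ) * ((2*ρ)^2)⁻¹ * L' with hbounddef
  have habs : ∀ θ, ‖c θ - a₀‖ = 2*ρ := by
    intro θ
    rw [hcdef, circleMap_sub_center, norm_circleMap_zero,
      abs_of_pos (by positivity : (0:ℝ) < 2*ρ)]
  have hnorm1 : ∀ θ, ‖deriv (circleMap a₀ (2*ρ)) θ‖ = 2*ρ := by
    intro θ
    rw [deriv_circleMap, norm_mul, Complex.norm_I, mul_one,
      norm_circleMap_zero, abs_of_pos (by positivity : (0:ℝ) < 2*ρ)]
  have hnorm2 : ∀ θ, ‖((c θ - a₀)^2)⁻¹‖ = ((2*ρ)^2)⁻¹ := by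
    intro θ
    rw [norm_inv, norm_pow, habs]
  have main := intervalIntegral.hasDerivAt_integral_of_dominated_loc_of_lip
    (F := F) (F' := F') (x₀ := b₀) (a := 0) (b := 2*Real.pi) (s := ball b₀ ρ)
    (bound := bound) (μ := MeasureTheory.volume) (ball_mem_nhds b₀ hρ) ?_ ?_ ?_ ?_ ?_ ?_
  · -- conclude
    have hrep : ∀ b ∈ ball b₀ ρ, Q1 g (a₀, b) =
        (2 * Real.pi * I : ℂ)⁻¹ • ∫ θ in (0:ℝ)..2*Real.pi, F b θ := by
      intro b hb
      have h2 : ∀ x ∈ closedBall a₀ (2*ρ), (x, b) ∈ U := fun x hx =>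
        hsub ⟨hx, closedBall_subset_closedBall (by linarith) (ball_subset_closedBall hb)⟩
      rw [repr1 hU hg (mem_ball_self (by positivity)) h2]
      rfl
    have heq : (fun y => Q1 g (a₀, y)) =ᶠ[nhds b₀]
        (fun b => (2 * Real.pi * I : ℂ)⁻¹ • ∫ θ in (0:ℝ)..2*Real.pi, F b θ) := by
      filter_upwards [isOpen_ball.mem_nhds (mem_ball_self hρ)] with b hb
      exact hrep b hb
    rw [heq.differentiableAt_iff]
    exact (main.2.const_smul ((2 * Real.pi * I : ℂ)⁻¹)).differentiableAt
  · -- hF_meas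
    filter_upwards [isOpen_ball.mem_nhds (mem_ball_self hρ)] with b hb
    apply Continuous.aestronglyMeasurable
    simp only [hFdef]
    exact hderc.fun_smul (hinvc.fun_smul (hg.cont.comp_continuous
      ((continuous_circleMap _ _).prodMk continuous_const)
      (fun θ => hcU θ b (ball_subset_closedBall hb))))
  · -- hF_int
    apply Continuous.intervalIntegrable
    simp only [hFdef]
    exact hderc.fun_smul (hinvc.fun_smul (hg.cont.comp_continuous
      ((continuous_circleMap _ _).prodMk continuous_const)
      (fun θ => hcU θ b₀ (mem_closedBall_self hρ.le))))
  · -- hF'_meas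
    apply Continuous.aestronglyMeasurable
    simp only [hF'def]
    exact hderc.fun_smul (hinvc.fun_smul ((contQ2 hU hg).comp_continuous
      ((continuous_circleMap _ _).prodMk continuous_const)
      (fun θ => hcU θ b₀ (mem_closedBall_self hρ.le))))
  · -- h_lipsch
    apply Filter.Eventually.of_forall
    intro θ _
    apply LipschitzOnWith.of_dist_le_mul
    intro x hx y hy
    rw [dist_eq_norm]
    have hgd : ∀ v ∈ ball b₀ ρ, DifferentiableAt ℂ (fun y => g (c θ, y)) v := by
      intro v hv
      exact hg.d2 (c θ, v) (hcU θ v (ball_subset_closedBall hv))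
    have hgb : ∀ v ∈ ball b₀ ρ, ‖deriv (fun y => g (c θ, y)) v‖ ≤ L' := by
      intro v hv
      exact hL' (c θ, v) ⟨circleMap_mem_sphere _ (by positivity) _,
        ball_subset_closedBall hv⟩
    have hlip := Convex.norm_image_sub_le_of_norm_deriv_le hgd hgb (convex_ball b₀ ρ) hy hx
    have e1 : F x θ - F y θ = deriv (circleMap a₀ (2*ρ)) θ • ((c θ - a₀)^2)⁻¹ •
        (g (c θ, x) - g (c θ, y)) := by
      simp only [hFdef, smul_sub]
    rw [e1, norm_smul, norm_smul, hnorm1, hnorm2]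
    have hco : (Real.nnabs (bound θ) : ℝ) = (2*ρ) * ((2*ρ)^2)⁻¹ * L' := by
      rw [Real.coe_nnabs, hbounddef]
      exact abs_of_nonneg (by positivity)
    rw [hco]
    have h2 : ‖g (c θ, x) - g (c θ, y)‖ ≤ L' * dist x y := by
      rw [dist_eq_norm]
      exact hlip
    have h3 : (0:ℝ) < (2*ρ) * ((2*ρ)^2)⁻¹ := by positivity
    calc 2*ρ * (((2*ρ)^2)⁻¹ * ‖g (c θ, x) - g (c θ, y)‖)
        = (2*ρ) * ((2*ρ)^2)⁻¹ * ‖g (c θ, x) - g (c θ, y)‖ := by ring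
      _ ≤ (2*ρ) * ((2*ρ)^2)⁻¹ * (L' * dist x y) := mul_le_mul_of_nonneg_left h2 h3.le
      _ = (2*ρ) * ((2*ρ)^2)⁻¹ * L' * dist x y := by ring
  · exact intervalIntegrable_const
  · -- h_diff
    apply Filter.Eventually.of_forall
    intro θ _
    have hder : HasDerivAt (fun y => g (c θ, y)) (Q2 g (c θ, b₀)) b₀ :=
      (hg.d2 (c θ, b₀) (hcU θ b₀ (mem_closedBall_self hρ.le))).hasDerivAt
    exact (hder.const_smul (((c θ - a₀)^2)⁻¹)).const_smul (deriv (circleMap a₀ (2*ρ)) θ)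

lemma niceQ1 {g : ℂ × ℂ → ℂ} {U : Set (ℂ × ℂ)} (hU : IsOpen U) (hg : Nice g U) :
    Nice (Q1 g) U where
  cont := contQ1 hU hg
  d1 := fun p hp => by
    have hsl : DifferentiableOn ℂ (fun x => g (x, p.2)) {x : ℂ | (x, p.2) ∈ U} :=
      fun x hx => (hg.d1 (x, p.2) hx).differentiableWithinAt
    have han := (hsl.analyticOnNhd (slice1_open hU p.2)).deriv
    exact (han p.1 hp).differentiableAt
  d2 := fun p hp => mixedQ1 hU hg hp

lemma nice_of_diff {f : ℂ × ℂ → ℂ} {U : Set (ℂ × ℂ)} (hU : IsOpen U)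
    (hf : DifferentiableOn ℂ f U) : Nice f U where
  cont := hf.continuousOn
  d1 := fun p hp =>
    (hf.differentiableAt (hU.mem_nhds hp)).comp p.1
      (differentiableAt_id.prodMk (differentiableAt_const p.2))
  d2 := fun p hp =>
    (hf.differentiableAt (hU.mem_nhds hp)).comp p.2
      ((differentiableAt_const p.1).prodMk differentiableAt_id)

lemma nice_iter {f : ℂ × ℂ → ℂ} {U : Set (ℂ × ℂ)} (hU : IsOpen U) (hf : Nice f U) :
    ∀ j, Nice (Q1^[j] f) U := by
  intro j
  induction j with
  | zero => exact hf
  | succ j ih =>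
    rw [Function.iterate_succ_apply']
    exact niceQ1 hU ih

lemma slice_iterate (g : ℂ × ℂ → ℂ) : ∀ (j : ℕ) (b x : ℂ),
    iteratedDeriv j (fun a => g (a, b)) x = Q1^[j] g (x, b) := by
  intro j
  induction j generalizing g with
  | zero => intro b x; simp
  | succ j ih =>
    intro b x
    rw [iteratedDeriv_succ']
    have : (deriv fun a => g (a, b)) = fun s => Q1 g (s, b) := rfl
    rw [this, ih (Q1 g) b x, ← Function.iterate_succ_apply]

lemma iter_sum {V : Set ℂ} (hV : IsOpen V) {s : Finset ℕ} (g : ℕ → ℂ → ℂ) (c : ℕ → ℂ)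
    (hg : ∀ i ∈ s, AnalyticOnNhd ℂ (g i) V) {x : ℂ} (hx : x ∈ V) (k : ℕ) :
    iteratedDeriv k (fun y => ∑ i ∈ s, g i y * c i) x
      = ∑ i ∈ s, iteratedDeriv k (g i) x * c i := by
  induction k generalizing g with
  | zero => simp
  | succ k ih =>
    rw [iteratedDeriv_succ']
    have h1 : deriv (fun y => ∑ i ∈ s, g i y * c i) =ᶠ[nhds x]
        (fun y => ∑ i ∈ s, deriv (g i) y * c i) := by
      filter_upwards [hV.mem_nhds hx] with y hy
      exact (HasDerivAt.fun_sum (fun i hi =>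
        ((hg i hi y hy).differentiableAt.hasDerivAt.mul_const (c i)))).deriv
    rw [Filter.EventuallyEq.iteratedDeriv_eq k h1,
      ih (fun i => deriv (g i)) (fun i hi => (hg i hi).deriv)]
    exact Finset.sum_congr rfl (fun i _ => by rw [← iteratedDeriv_succ'])

lemma sum_Icc_one (n : ℕ) (F : ℕ → ℂ) :
    ∑ j ∈ Finset.Icc 1 n, F j = ∑ i ∈ Finset.range n, F (i+1) := by
  induction n with
  | zero => simp
  | succ n ih => rw [Finset.sum_Icc_succ_top (by omega), ih, Finset.sum_range_succ]


theorem stmt4 (U : Set (ℂ × ℂ)) (hU : IsOpen U) (hUO : U ⊆ Oset)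
    (f : ℂ × ℂ → ℂ) (hf : DifferentiableOn ℂ f U) (m n : ℕ)
    (hm : 1 ≤ m) (hn : 1 ≤ n)
    (z w : ℂ) (hzw : (z, w) ∈ U) (hz : z ≠ 0) (hw : w ≠ 0) :
    PM n m f z w =
      ∑ j ∈ Finset.Icc 1 n, ∑ k ∈ Finset.Icc 1 m,
        (iteratedDeriv k (fun b => iteratedDeriv j (fun a => f (a, b)) z) w)
          * (1 - z * w) ^ (j + k)
          * ((n.factorial : ℂ) * (m.factorial : ℂ) / ((j.factorial : ℂ) * (k.factorial : ℂ)))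
          * ((n - 1).choose (j - 1) : ℂ) * ((m - 1).choose (k - 1) : ℂ)
          * (-w) ^ (n - j) * (-z) ^ (m - k) := by
  classical
  have hNice : ∀ j, Nice (Q1^[j] f) U := nice_iter hU (nice_of_diff hU hf)
  have hV2 : IsOpen {b : ℂ | (z, b) ∈ U} := slice2_open hU z
  have hwV2 : w ∈ {b : ℂ | (z, b) ∈ U} := hzw
  have hgan : ∀ j, AnalyticOnNhd ℂ (fun b => Q1^[j] f (z, b)) {b : ℂ | (z, b) ∈ U} := by
    intro j
    have hd : DifferentiableOn ℂ (fun b => Q1^[j] f (z, b)) {b : ℂ | (z, b) ∈ U} :=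
      fun b hb => ((hNice j).d2 (z, b) hb).differentiableWithinAt
    exact hd.analyticOnNhd hV2
  -- the open set of good `v`'s
  set W2 : Set ℂ := {v | 1 + z * v ≠ 0 ∧ (z, (w + v) / (1 + z * v)) ∈ U} with hW2def
  have hW2open : IsOpen W2 := by
    have hS : IsOpen {v : ℂ | 1 + z * v ≠ 0} := by
      have : {v : ℂ | 1 + z * v ≠ 0} = (fun v => 1 + z * v) ⁻¹' ({0}ᶜ) := rfl
      rw [this]
      exact isOpen_compl_singleton.preimage (by continuity)
    have hTc : ContinuousOn (fun v : ℂ => (w + v) / (1 + z * v)) {v : ℂ | 1 + z * v ≠ 0} :=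
      ContinuousOn.div (by fun_prop) (by fun_prop) (fun x hx => hx)
    have : W2 = {v : ℂ | 1 + z * v ≠ 0} ∩
        ((fun v : ℂ => (w + v) / (1 + z * v)) ⁻¹' {b : ℂ | (z, b) ∈ U}) := by
      ext x; simp [hW2def]
    rw [this]
    exact hTc.isOpen_inter_preimage hS hV2
  have h0W2 : (0:ℂ) ∈ W2 := by
    constructor
    · simp
    · simpa using hzw
  -- inner formula
  have hinner : ∀ v ∈ W2, iteratedDeriv n (fun u => f ((z + u) / (1 + w * u), (w + v) / (1 + z * v))) 0
      = ∑ i ∈ Finset.range n, Q1^[i+1] f (z, (w + v) / (1 + z * v)) *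
          ((1 - z*w)^(i+1) * cc n (i+1) * (-w)^(n-(i+1))) := by
    intro v hv
    have hVb : IsOpen {a : ℂ | (a, (w + v) / (1 + z * v)) ∈ U} :=
      slice1_open hU ((w + v) / (1 + z * v))
    have hfb : AnalyticOnNhd ℂ (fun a => f (a, (w + v) / (1 + z * v)))
        {a : ℂ | (a, (w + v) / (1 + z * v)) ∈ U} := by
      have hd : DifferentiableOn ℂ (fun a => f (a, (w + v) / (1 + z * v)))
          {a : ℂ | (a, (w + v) / (1 + z * v)) ∈ U} :=
        fun a ha => ((nice_of_diff hU hf).d1 (a, (w + v) / (1 + z * v)) ha).differentiableWithinAt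
      exact hd.analyticOnNhd hVb
    have h := key hVb hfb z w n hn 0 (by simp) (by simpa using hv.2)
    simp only [mul_zero, add_zero, one_pow, div_one] at h
    rw [h]
    apply Finset.sum_congr rfl
    intro i _
    rw [slice_iterate f (i+1) ((w + v) / (1 + z * v)) z]
  -- outer step
  have hPM : PM n m f z w = iteratedDeriv m
      (fun v => iteratedDeriv n (fun u => f ((z + u) / (1 + w * u), (w + v) / (1 + z * v))) 0) 0 := rfl
  have hT2an : AnalyticOnNhd ℂ (fun v : ℂ => (w + v) / (1 + z * v)) W2 := by
    apply AnalyticOnNhd.div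
    · exact analyticOnNhd_const.add analyticOnNhd_id
    · exact analyticOnNhd_const.add (analyticOnNhd_const.mul analyticOnNhd_id)
    · exact fun v hv => hv.1
  have hGan : ∀ i : ℕ, AnalyticOnNhd ℂ (fun v => Q1^[i+1] f (z, (w + v) / (1 + z * v))) W2 := by
    intro i
    exact (hgan (i+1)).comp hT2an (fun v hv => hv.2)
  have houter : PM n m f z w = ∑ i ∈ Finset.range n,
      iteratedDeriv m (fun v => Q1^[i+1] f (z, (w + v) / (1 + z * v))) 0 *
        ((1 - z*w)^(i+1) * cc n (i+1) * (-w)^(n-(i+1))) := by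
    rw [hPM]
    have heq : (fun v => iteratedDeriv n
        (fun u => f ((z + u) / (1 + w * u), (w + v) / (1 + z * v))) 0) =ᶠ[nhds 0]
        (fun v => ∑ i ∈ Finset.range n, Q1^[i+1] f (z, (w + v) / (1 + z * v)) *
          ((1 - z*w)^(i+1) * cc n (i+1) * (-w)^(n-(i+1)))) := by
      filter_upwards [hW2open.mem_nhds h0W2] with v hv
      exact hinner v hv
    rw [Filter.EventuallyEq.iteratedDeriv_eq m heq]
    exact iter_sum hW2open _ _ (fun i _ => hGan i) h0W2 m
  -- second variable expansion
  have hsecond : ∀ i : ℕ, iteratedDeriv m (fun v => Q1^[i+1] f (z, (w + v) / (1 + z * v))) 0 =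
      ∑ k ∈ Finset.range m, iteratedDeriv (k+1) (fun b => Q1^[i+1] f (z, b)) w *
        ((1 - w*z)^(k+1) * cc m (k+1) * (-z)^(m-(k+1))) := by
    intro i
    have h := key hV2 (hgan (i+1)) w z m hm 0 (by simp) (by simpa using hwV2)
    simp only [mul_zero, add_zero, one_pow, div_one] at h
    rw [h]
  rw [houter]
  rw [sum_Icc_one n]
  apply Finset.sum_congr rfl
  intro i _
  rw [sum_Icc_one m, hsecond i, Finset.sum_mul]
  apply Finset.sum_congr rfl
  intro k _
  have hsl : (fun b => iteratedDeriv (i+1) (fun a => f (a, b)) z)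
      = fun b => Q1^[i+1] f (z, b) := by
    funext b
    exact slice_iterate f (i+1) b z
  rw [hsl]
  rw [cc_succ, cc_succ]
  simp only [Nat.add_sub_cancel]
  have hne1 : ((i+1).factorial : ℂ) ≠ 0 := Nat.cast_ne_zero.mpr (Nat.factorial_ne_zero _)
  have hne2 : ((k+1).factorial : ℂ) ≠ 0 := Nat.cast_ne_zero.mpr (Nat.factorial_ne_zero _)
  field_simp
  ring
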